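/- (Resplit multi-ratio / dSKP relation) Let v0, v1, v2, v3, v4, ṽ0 be nonzero vectors in C^{d+1} and a, b, c, d ∈ C* such that v0 = −a·v1 − b·v2 = c·v3 + d·v4 and ṽ0 = a·v1 + d·v4 = −b·v2 − c·v3, with the six projectivized points pairwise distinct along the relevant lines. Then in any affine chart containing all six points, mr([v1],[v0],[v2],[v3],[ṽ0],[v4]) = ∏ of the six directed ratios equals −1. -/

import Mathlib

/-- Resplit multi-ratio / dSKP relation. With vector relations
`v0 = −a v1 − b v2 = c v3 + e v4` and `ṽ0 = a v1 + e v4 = −b v2 − c v3`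
(`a,b,c,e ∈ ℂ*`), the multi-ratio `mr([v1],[v0],[v2],[v3],[ṽ0],[v4])`
computed in any affine chart (given by a functional `φ` not vanishing on the
six points; chart image of `[x]` is `(φ x)⁻¹ • x`) equals `−1`. The three
directed ratio scalars `r1, r2, r3` of the multi-ratio are characterized by
the chart equations below. -/
theorem resplit_dSKP_multi_ratio (d : ℕ)
    (v0 v1 v2 v3 v4 vt0 : Fin (d + 1) → ℂ)
    (a b c e : ℂ) (ha : a ≠ 0) (hb : b ≠ 0) (hc : c ≠ 0) (he : e ≠ 0)
    (h1 : v0 = -(a • v1) - b • v2) (h2 : v0 = c • v3 + e • v4)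
    (h3 : vt0 = a • v1 + e • v4) (h4 : vt0 = -(b • v2) - c • v3)
    (φ : (Fin (d + 1) → ℂ) →ₗ[ℂ] ℂ)
    (hφ : ∀ x ∈ ({v0, v1, v2, v3, v4, vt0} : Set (Fin (d + 1) → ℂ)), φ x ≠ 0)
    (r1 r2 r3 : ℂ)
    (hden1 : (φ v0)⁻¹ • v0 - (φ v2)⁻¹ • v2 ≠ 0)
    (hden2 : (φ v3)⁻¹ • v3 - (φ vt0)⁻¹ • vt0 ≠ 0)
    (hden3 : (φ v4)⁻¹ • v4 - (φ v1)⁻¹ • v1 ≠ 0)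
    (hr1 : (φ v1)⁻¹ • v1 - (φ v0)⁻¹ • v0 = r1 • ((φ v0)⁻¹ • v0 - (φ v2)⁻¹ • v2))
    (hr2 : (φ v2)⁻¹ • v2 - (φ v3)⁻¹ • v3 = r2 • ((φ v3)⁻¹ • v3 - (φ vt0)⁻¹ • vt0))
    (hr3 : (φ vt0)⁻¹ • vt0 - (φ v4)⁻¹ • v4 = r3 • ((φ v4)⁻¹ • v4 - (φ v1)⁻¹ • v1)) :
    r1 * r2 * r3 = -1 := by
  have hF : φ v0 ≠ 0 := hφ _ (by simp)
  have hA : φ v1 ≠ 0 := hφ _ (by simp)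
  have hB : φ v2 ≠ 0 := hφ _ (by simp)
  have hC : φ v3 ≠ 0 := hφ _ (by simp)
  have hD : φ v4 ≠ 0 := hφ _ (by simp)
  have hT : φ vt0 ≠ 0 := hφ _ (by simp)
  have hFeq : φ v0 = -(a * φ v1) - b * φ v2 := by rw [h1]; simp
  have hTeq : φ vt0 = a * φ v1 + e * φ v4 := by rw [h3]; simp
  have hT4eq : φ vt0 = -(b * φ v2) - c * φ v3 := by rw [h4]; simp
  have hF' : -(a * φ v1) - b * φ v2 ≠ 0 := hFeq ▸ hF
  have hT' : a * φ v1 + e * φ v4 ≠ 0 := hTeq ▸ hT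
  have hT4' : -(b * φ v2) - c * φ v3 ≠ 0 := hT4eq ▸ hT
  -- closed forms for the three ratios
  have e1 : (φ v1)⁻¹ • v1 - (φ v0)⁻¹ • v0
      = (b * φ v2 / (a * φ v1)) • ((φ v0)⁻¹ • v0 - (φ v2)⁻¹ • v2) := by
    rw [h1]
    funext i
    simp only [map_sub, map_neg, map_smul, smul_eq_mul, Pi.sub_apply, Pi.smul_apply,
      Pi.neg_apply]
    rw [show -(a * φ v1) - b * φ v2 = -(a * φ v1 + b * φ v2) by ring]
    have hF'' : a * φ v1 + b * φ v2 ≠ 0 := fun h => hF' (by linear_combination -h)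
    field_simp
    linear_combination (-(a * v1 i + b * v2 i)) * mul_inv_cancel₀ hF''
  have e2 : (φ v2)⁻¹ • v2 - (φ v3)⁻¹ • v3
      = (φ vt0 / (b * φ v2)) • ((φ v3)⁻¹ • v3 - (φ vt0)⁻¹ • vt0) := by
    rw [hT4eq, h4]
    funext i
    simp only [map_sub, map_neg, map_smul, smul_eq_mul, Pi.sub_apply, Pi.smul_apply,
      Pi.neg_apply]
    rw [show -(b * φ v2) - c * φ v3 = -(b * φ v2 + c * φ v3) by ring]
    have hT4'' : b * φ v2 + c * φ v3 ≠ 0 := fun h => hT4' (by linear_combination -h)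
    field_simp
    linear_combination (-(v2 i * φ v3 * b + φ v3 * v3 i * c)) * mul_inv_cancel₀ hT4''
  have e3 : (φ vt0)⁻¹ • vt0 - (φ v4)⁻¹ • v4
      = (-(a * φ v1) / φ vt0) • ((φ v4)⁻¹ • v4 - (φ v1)⁻¹ • v1) := by
    rw [hTeq, h3]
    funext i
    simp only [map_sub, map_neg, map_smul, smul_eq_mul, Pi.sub_apply, Pi.smul_apply,
      Pi.neg_apply, Pi.add_apply]
    field_simp
    ring
  have key : ∀ (r s : ℂ) (x : Fin (d + 1) → ℂ), x ≠ 0 → r • x = s • x → r = s := by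
    intro r s x hx h
    have : (r - s) • x = 0 := by rw [sub_smul, h, sub_self]
    rcases smul_eq_zero.mp this with h' | h'
    · exact sub_eq_zero.mp h'
    · exact absurd h' hx
  have hr1' : r1 = b * φ v2 / (a * φ v1) := key _ _ _ hden1 (hr1 ▸ e1 ▸ rfl)
  have hr2' : r2 = φ vt0 / (b * φ v2) := key _ _ _ hden2 (hr2 ▸ e2 ▸ rfl)
  have hr3' : r3 = -(a * φ v1) / φ vt0 := key _ _ _ hden3 (hr3 ▸ e3 ▸ rfl)
  rw [hr1', hr2', hr3']
  field_simp
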